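/- For any invertible linear map g on R^d and any r-dimensional subspace V of R^d, the Hausdorff-type distance between gV and the top singular subspace V_g^+ satisfies d_H(gV, V_g^+) ≤ r·σ_1(g)^{r-1}·σ_{r+1}(g) / ‖(∧^r g)(v)‖, where v is the wedge product of an orthonormal basis of V. -/

import Mathlib

open scoped RealInnerProductSpace
open Matrix

noncomputable section

abbrev Euc (d : ℕ) := EuclideanSpace ℝ (Fin d)

/-- Norm of the wedge product of a family of vectors (square root of Gram determinant). -/
def wnorm {d : ℕ} {ι : Type*} [Fintype ι] [DecidableEq ι] (x : ι → Euc d) : ℝ :=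
  Real.sqrt (Matrix.of fun i j => ⟪x i, x j⟫).det

/-- The span of the first `r` standard basis vectors of `ℝ^d`. -/
def stdSpanLT (d r : ℕ) : Submodule ℝ (Euc d) :=
  Submodule.span ℝ ((fun i => EuclideanSpace.single i (1 : ℝ)) '' {i : Fin d | (i : ℕ) < r})

/-- `d_H(V, V') = sup` over unit vectors `v ∈ V` of `dist(v, V')`. -/
def dH {d : ℕ} (V V' : Submodule ℝ (Euc d)) : ℝ :=
  sSup {c | ∃ v ∈ V, ‖v‖ = 1 ∧ c = Metric.infDist v (V' : Set (Euc d))}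

lemma gram_det_sq {F : Type*} [NormedAddCommGroup F] [InnerProductSpace ℝ F] {r : ℕ}
    (e : OrthonormalBasis (Fin r) ℝ F) (x : Fin r → F) :
    (Matrix.of fun i j => ⟪x i, x j⟫).det = (e.toBasis.det x) ^ 2 := by
  have key : (Matrix.of fun i j => ⟪x i, x j⟫)
      = (e.toBasis.toMatrix x)ᵀ * (e.toBasis.toMatrix x) := by
    ext i j
    rw [Matrix.mul_apply, Matrix.of_apply, ← e.repr.inner_map_map (x i) (x j),
      PiLp.inner_apply]
    simp only [Matrix.transpose_apply, Module.Basis.toMatrix_apply,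
      OrthonormalBasis.coe_toBasis_repr_apply, RCLike.inner_apply, conj_trivial]
    exact Finset.sum_congr rfl fun _ _ => mul_comm _ _
  rw [key, Matrix.det_mul, Matrix.det_transpose, Module.Basis.det_apply, sq]

lemma orthonormal_expansion {F : Type*} [NormedAddCommGroup F] [InnerProductSpace ℝ F] {r : ℕ}
    {w : Fin r → F} (hw : Orthonormal ℝ w) {x : F}
    (hx : x ∈ Submodule.span ℝ (Set.range w)) : ∑ j, ⟪w j, x⟫ • w j = x := by
  obtain ⟨c, rfl⟩ := Submodule.mem_span_range_iff_exists_fun ℝ |>.mp hx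
  congr 1
  ext j
  rw [hw.inner_right_fintype]

lemma gram_pos_le {d r : ℕ} (hr : 0 < r) (g : Euc d →ₗ[ℝ] Euc d) (hg : Function.Injective g)
    (v w : Fin r → Euc d) (hv : Orthonormal ℝ v) (hw : Orthonormal ℝ w)
    (hsp : Submodule.span ℝ (Set.range v) = Submodule.span ℝ (Set.range w)) :
    0 < (Matrix.of fun i j => ⟪g (v i), g (v j)⟫).det ∧
      (Matrix.of fun i j => ⟪g (v i), g (v j)⟫).det ≤ ∏ i, ‖g (w i)‖ ^ 2 := by
  classical
  haveI : NeZero r := ⟨hr.ne'⟩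
  haveI : WellFoundedLT (Fin r) := inferInstance
  haveI : LocallyFiniteOrderBot (Fin r) := inferInstance
  have hker : LinearMap.ker g = ⊥ := LinearMap.ker_eq_bot.mpr hg
  set W : Submodule ℝ (Euc d) := Submodule.span ℝ (Set.range fun i => g (w i)) with hW
  have hWv : Submodule.span ℝ (Set.range fun i => g (v i)) = W := by
    rw [hW]
    have h1 : (Set.range fun i => g (v i)) = g '' Set.range v := by
      rw [← Set.range_comp]; rfl
    have h2 : (Set.range fun i => g (w i)) = g '' Set.range w := by
      rw [← Set.range_comp]; rfl
    rw [h1, h2, ← Submodule.map_span, ← Submodule.map_span, hsp]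
  have hindep_w : LinearIndependent ℝ (fun i => g (w i)) :=
    hw.linearIndependent.map' g hker
  have hindep_v : LinearIndependent ℝ (fun i => g (v i)) :=
    hv.linearIndependent.map' g hker
  have hfin : Module.finrank ℝ W = Fintype.card (Fin r) := by
    rw [hW, finrank_span_eq_card hindep_w]
  -- families inside W
  have hmemw : ∀ i, g (w i) ∈ W := fun i => Submodule.subset_span ⟨i, rfl⟩
  have hmemv : ∀ i, g (v i) ∈ W := fun i => hWv ▸ Submodule.subset_span ⟨i, rfl⟩
  set x' : Fin r → W := fun i => ⟨g (v i), hmemv i⟩ with hx'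
  set y' : Fin r → W := fun i => ⟨g (w i), hmemw i⟩ with hy'
  set b : OrthonormalBasis (Fin r) ℝ W := InnerProductSpace.gramSchmidtOrthonormalBasis (ι := Fin r) (𝕜 := ℝ) (E := W) hfin y' with hb
  -- the change of coordinates matrix
  set D : Matrix (Fin r) (Fin r) ℝ := Matrix.of fun i j => ⟪w j, v i⟫ with hD
  have hexp : ∀ i, v i = ∑ j, D i j • w j := by
    intro i
    exact (orthonormal_expansion hw (hsp ▸ Submodule.subset_span ⟨i, rfl⟩)).symm
  have hwij : ∀ j m, (⟪w j, w m⟫ : ℝ) = if j = m then 1 else 0 := fun j m =>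
    orthonormal_iff_ite.mp hw j m
  have hDD : D * Dᵀ = 1 := by
    ext i i'
    have h1 : (⟪v i, v i'⟫ : ℝ) = ∑ j, D i j * D i' j := by
      conv_lhs => rw [hexp i, hexp i']
      rw [sum_inner]
      refine Finset.sum_congr rfl fun j _ => ?_
      rw [real_inner_smul_left, inner_sum]
      rw [Finset.sum_eq_single j]
      · rw [real_inner_smul_right, hwij j j, if_pos rfl]; ring
      · intro m _ hm
        rw [real_inner_smul_right, hwij j m, if_neg (Ne.symm hm)]; ring
      · intro h; exact absurd (Finset.mem_univ j) h
    have h2 : (⟪v i, v i'⟫ : ℝ) = if i = i' then 1 else 0 :=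
      orthonormal_iff_ite.mp hv i i'
    rw [Matrix.mul_apply]
    simp only [Matrix.transpose_apply]
    rw [← h1, h2, Matrix.one_apply]
  have hdetD : D.det * D.det = 1 := by
    have := congrArg Matrix.det hDD
    rwa [Matrix.det_mul, Matrix.det_transpose, Matrix.det_one] at this
  -- x' in terms of y'
  have hexp' : ∀ i, x' i = ∑ j, D i j • y' j := by
    intro i
    apply Subtype.ext
    push_cast
    simp only [hx', hy']
    conv_lhs => rw [hexp i]
    rw [map_sum]
    simp only [_root_.map_smul]
  have hmat : b.toBasis.toMatrix x' = b.toBasis.toMatrix y' * Dᵀ := by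
    ext t i
    rw [Module.Basis.toMatrix_apply, Matrix.mul_apply, hexp' i, map_sum, Finsupp.finset_sum_apply]
    refine Finset.sum_congr rfl fun j _ => ?_
    rw [_root_.map_smul, Finsupp.smul_apply, smul_eq_mul, Module.Basis.toMatrix_apply,
      Matrix.transpose_apply, mul_comm]
  have hdet2 : (b.toBasis.det x') ^ 2 = (b.toBasis.det y') ^ 2 := by
    rw [Module.Basis.det_apply, Module.Basis.det_apply, hmat, Matrix.det_mul, Matrix.det_transpose,
      mul_pow, sq D.det, hdetD, mul_one]
  -- identify the Gram determinants
  have hGv : (Matrix.of fun i j => ⟪g (v i), g (v j)⟫).det = (b.toBasis.det x') ^ 2 :=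
    gram_det_sq b x'
  constructor
  · rw [hGv]
    have hxb : b.toBasis.det x' ≠ 0 := by
      have hind : LinearIndependent ℝ x' := hindep_v.of_comp W.subtype
      have hspx : Submodule.span ℝ (Set.range x') = ⊤ := by
        apply Submodule.map_injective_of_injective W.injective_subtype
        rw [Submodule.map_span, Submodule.map_top, Submodule.range_subtype, ← Set.range_comp]
        exact hWv
      exact ((Module.Basis.is_basis_iff_det b.toBasis).mp ⟨hind, hspx⟩).ne_zero
    positivity
  · rw [hGv, hdet2]
    have hgs : b.toBasis.det y' = ∏ i, ⟪b i, y' i⟫ := InnerProductSpace.gramSchmidtOrthonormalBasis_det hfin y'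
    rw [hgs, ← Finset.prod_pow]
    refine Finset.prod_le_prod (fun i _ => sq_nonneg _) fun i _ => ?_
    have hcs := abs_real_inner_le_norm (b i) (y' i)
    rw [b.orthonormal.1 i, one_mul] at hcs
    have : ‖y' i‖ = ‖g (w i)‖ := rfl
    calc ⟪b i, y' i⟫ ^ 2 = |⟪b i, y' i⟫| ^ 2 := (sq_abs _).symm
      _ ≤ ‖y' i‖ ^ 2 := by nlinarith [abs_nonneg (⟪b i, y' i⟫ : ℝ)]
      _ = ‖g (w i)‖ ^ 2 := by rw [this]


set_option maxHeartbeats 2000000 in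
theorem stmt0 {d r : ℕ} (hr : 0 < r) (hrd : r < d)
    (g : Euc d →ₗ[ℝ] Euc d) (hg : Function.Bijective g)
    -- Cartan decomposition `g = k ∘ diag σ ∘ l` with `σ_1 ≥ ... ≥ σ_d > 0`
    (k l : Euc d ≃ₗᵢ[ℝ] Euc d) (σ : Fin d → ℝ) (hσmono : Antitone σ) (hσpos : ∀ i, 0 < σ i)
    (hcartan : ∀ x : Euc d, ∀ i : Fin d, k.symm (g x) i = σ i * l x i)
    (V : Submodule ℝ (Euc d)) (v : Fin r → Euc d)
    (hon : Orthonormal ℝ v) (hspan : Submodule.span ℝ (Set.range v) = V) :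
    dH (V.map g) ((stdSpanLT d r).map (k.toLinearEquiv : Euc d →ₗ[ℝ] Euc d)) ≤
      r * (σ ⟨0, Nat.lt_of_le_of_lt (Nat.zero_le r) hrd⟩) ^ (r - 1) * σ ⟨r, hrd⟩ /
        wnorm (fun i => g (v i)) := by
  classical
  have h0d : 0 < d := Nat.lt_of_le_of_lt (Nat.zero_le r) hrd
  have hnormsq : ∀ z : Euc d, ‖z‖ ^ 2 = ∑ i, (z i) ^ 2 := by
    intro z
    rw [← real_inner_self_eq_norm_sq, PiLp.inner_apply]
    simp only [RCLike.inner_apply, conj_trivial, sq]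
  -- operator norm bound
  have hgle : ∀ x : Euc d, ‖g x‖ ≤ σ ⟨0, h0d⟩ * ‖x‖ := by
    intro x
    have h1 : ‖k.symm (g x)‖ = ‖g x‖ := k.symm.norm_map (g x)
    have h2 : ‖l x‖ = ‖x‖ := l.norm_map x
    have hsq : ‖k.symm (g x)‖ ^ 2 ≤ (σ ⟨0, h0d⟩ * ‖x‖) ^ 2 := by
      rw [hnormsq]
      calc ∑ i, (k.symm (g x) i) ^ 2 ≤ ∑ i, σ ⟨0, h0d⟩ ^ 2 * (l x i) ^ 2 := by
            refine Finset.sum_le_sum fun i _ => ?_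
            rw [hcartan x i, mul_pow]
            have h3 : σ i ≤ σ ⟨0, h0d⟩ := hσmono (by simp [Fin.le_def])
            exact mul_le_mul_of_nonneg_right (by nlinarith [hσpos i]) (sq_nonneg (l x i))
        _ = σ ⟨0, h0d⟩ ^ 2 * ∑ i, (l x i) ^ 2 := by rw [Finset.mul_sum]
        _ = σ ⟨0, h0d⟩ ^ 2 * ‖l x‖ ^ 2 := by rw [hnormsq]
        _ = (σ ⟨0, h0d⟩ * ‖x‖) ^ 2 := by rw [h2]; ring
    have hge : (0:ℝ) ≤ σ ⟨0, h0d⟩ * ‖x‖ := mul_nonneg (hσpos _).le (norm_nonneg x)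
    nlinarith [norm_nonneg (k.symm (g x))]
  have hWn0 : 0 ≤ wnorm fun i => g (v i) := Real.sqrt_nonneg _
  have hRHS0 : (0:ℝ) ≤ r * σ ⟨0, h0d⟩ ^ (r - 1) * σ ⟨r, hrd⟩ / wnorm fun i => g (v i) :=
    div_nonneg (mul_nonneg (mul_nonneg (Nat.cast_nonneg r)
      (pow_nonneg (hσpos _).le _)) (hσpos _).le) hWn0
  unfold dH
  apply Real.sSup_le _ hRHS0
  rintro c ⟨w0, hw0mem, hw0norm, rfl⟩
  obtain ⟨u, huV, hgu⟩ := Submodule.mem_map.mp hw0mem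
  have hune : u ≠ 0 := by
    rintro rfl
    rw [map_zero] at hgu
    rw [← hgu, norm_zero] at hw0norm
    exact one_ne_zero hw0norm.symm
  have hu_pos : 0 < ‖u‖ := norm_pos_iff.mpr hune
  -- orthonormal basis of V extending the normalization of u
  have hfinV : Module.finrank ℝ V = Fintype.card (Fin r) := by
    rw [← hspan, finrank_span_eq_card hon.linearIndependent]
  set u' : Euc d := ‖u‖⁻¹ • u with hu'def
  have hu'V : u' ∈ V := V.smul_mem _ huV
  have hu'norm : ‖u'‖ = 1 := by
    rw [hu'def, norm_smul, norm_inv, norm_norm, inv_mul_cancel₀ hu_pos.ne']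
  have hres : Orthonormal ℝ (Set.restrict {(⟨0, hr⟩ : Fin r)}
      (fun _ : Fin r => (⟨u', hu'V⟩ : V))) := by
    constructor
    · rintro ⟨i, hi⟩
      exact hu'norm
    · rintro ⟨i, hi⟩ ⟨j, hj⟩ hne
      exact absurd (Subtype.ext ((Set.mem_singleton_iff.mp hi).trans
        (Set.mem_singleton_iff.mp hj).symm)) hne
  obtain ⟨bw, hbw⟩ := Orthonormal.exists_orthonormalBasis_extension_of_card_eq hfinV hres
  set wE : Fin r → Euc d := fun i => ((bw i : V) : Euc d) with hwEdef
  have honw : Orthonormal ℝ wE := bw.orthonormal.comp_linearIsometry V.subtypeₗᵢ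
  have hspw : Submodule.span ℝ (Set.range wE) = V := by
    have h1 : Set.range wE = V.subtype '' Set.range (⇑bw) := by
      rw [← Set.range_comp]; rfl
    have h2 : Submodule.span ℝ (Set.range (⇑bw)) = ⊤ := by
      rw [← bw.coe_toBasis]; exact bw.toBasis.span_eq
    rw [h1, ← Submodule.map_span, h2, Submodule.map_top, Submodule.range_subtype]
  have hwE0 : wE ⟨0, hr⟩ = u' := by
    rw [hwEdef]
    simp only [hbw ⟨0, hr⟩ (Set.mem_singleton _)]
  -- Gram determinant facts
  obtain ⟨hpos, hle⟩ := gram_pos_le hr g hg.injective v wE hon honw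
    (by rw [hspan, hspw])
  have hWnpos : 0 < wnorm fun i => g (v i) := Real.sqrt_pos.mpr hpos
  -- product bound
  have hprod : ∏ i, ‖g (wE i)‖ ^ 2 ≤ (‖u‖⁻¹ * σ ⟨0, h0d⟩ ^ (r - 1)) ^ 2 := by
    rw [← Finset.mul_prod_erase Finset.univ _ (Finset.mem_univ (⟨0, hr⟩ : Fin r))]
    have hgu' : ‖g (wE ⟨0, hr⟩)‖ = ‖u‖⁻¹ := by
      rw [hwE0, hu'def, _root_.map_smul, norm_smul, hgu, hw0norm, norm_inv, norm_norm, mul_one]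
    have hrest : ∏ i ∈ Finset.univ.erase (⟨0, hr⟩ : Fin r), ‖g (wE i)‖ ^ 2
        ≤ (σ ⟨0, h0d⟩ ^ (r - 1)) ^ 2 := by
      have hcard : (Finset.univ.erase (⟨0, hr⟩ : Fin r)).card = r - 1 := by
        rw [Finset.card_erase_of_mem (Finset.mem_univ _), Finset.card_univ, Fintype.card_fin]
      calc ∏ i ∈ Finset.univ.erase (⟨0, hr⟩ : Fin r), ‖g (wE i)‖ ^ 2
          ≤ ∏ _i ∈ Finset.univ.erase (⟨0, hr⟩ : Fin r), σ ⟨0, h0d⟩ ^ 2 := by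
            refine Finset.prod_le_prod (fun i _ => sq_nonneg _) fun i _ => ?_
            have := hgle (wE i)
            rw [honw.1 i, mul_one] at this
            exact pow_le_pow_left₀ (norm_nonneg _) this 2
        _ = (σ ⟨0, h0d⟩ ^ (r - 1)) ^ 2 := by
            rw [Finset.prod_const, hcard, ← pow_mul, ← pow_mul, Nat.mul_comm]
    calc ‖g (wE ⟨0, hr⟩)‖ ^ 2 * ∏ i ∈ Finset.univ.erase (⟨0, hr⟩ : Fin r), ‖g (wE i)‖ ^ 2
        ≤ (‖u‖⁻¹) ^ 2 * (σ ⟨0, h0d⟩ ^ (r - 1)) ^ 2 := by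
          rw [hgu']
          exact mul_le_mul_of_nonneg_left hrest (sq_nonneg _)
      _ = (‖u‖⁻¹ * σ ⟨0, h0d⟩ ^ (r - 1)) ^ 2 := by ring
  have hkey : wnorm (fun i => g (v i)) * ‖u‖ ≤ σ ⟨0, h0d⟩ ^ (r - 1) := by
    have hs : wnorm (fun i => g (v i)) ≤ ‖u‖⁻¹ * σ ⟨0, h0d⟩ ^ (r - 1) := by
      have h1 : wnorm (fun i => g (v i)) = Real.sqrt
          (Matrix.of fun i j => ⟪g (v i), g (v j)⟫).det := rfl
      rw [h1]
      have h2 : (0:ℝ) ≤ ‖u‖⁻¹ * σ ⟨0, h0d⟩ ^ (r - 1) :=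
        mul_nonneg (inv_nonneg.mpr hu_pos.le) (pow_nonneg (hσpos _).le _)
      calc Real.sqrt (Matrix.of fun i j => ⟪g (v i), g (v j)⟫).det
          ≤ Real.sqrt ((‖u‖⁻¹ * σ ⟨0, h0d⟩ ^ (r - 1)) ^ 2) :=
            Real.sqrt_le_sqrt (hle.trans hprod)
        _ = ‖u‖⁻¹ * σ ⟨0, h0d⟩ ^ (r - 1) := Real.sqrt_sq h2
    calc wnorm (fun i => g (v i)) * ‖u‖ ≤ (‖u‖⁻¹ * σ ⟨0, h0d⟩ ^ (r - 1)) * ‖u‖ :=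
          mul_le_mul_of_nonneg_right hs hu_pos.le
      _ = σ ⟨0, h0d⟩ ^ (r - 1) := by field_simp
  -- the distance bound
  set x : Euc d := k.symm w0 with hxdef
  set y : Euc d := WithLp.toLp 2 fun i => if (i : ℕ) < r then x i else 0 with hydef
  have hymem : y ∈ stdSpanLT d r := by
    have hsum : (∑ i ∈ Finset.univ.filter (fun i : Fin d => (i:ℕ) < r),
        x i • EuclideanSpace.single i (1:ℝ)) = y := by
      refine PiLp.ext fun j => ?_
      rw [hydef]
      have happ : (∑ i ∈ Finset.univ.filter (fun i : Fin d => (i:ℕ) < r),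
          x i • EuclideanSpace.single i (1:ℝ)) j
          = ∑ i ∈ Finset.univ.filter (fun i : Fin d => (i:ℕ) < r),
            (x i • EuclideanSpace.single i (1:ℝ)) j := by rw [WithLp.ofLp_sum, Finset.sum_apply]
      rw [happ]
      simp only [PiLp.smul_apply, EuclideanSpace.single_apply, smul_eq_mul, mul_ite,
        mul_one, mul_zero]
      rw [Finset.sum_ite_eq]
      simp [Finset.mem_filter]
    rw [← hsum]
    refine Submodule.sum_mem _ fun i hi => ?_
    refine Submodule.smul_mem _ _ (Submodule.subset_span ⟨i, ?_, rfl⟩)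
    exact (Finset.mem_filter.mp hi).2
  have hky : k y ∈ ((stdSpanLT d r).map (k.toLinearEquiv : Euc d →ₗ[ℝ] Euc d) :
      Submodule ℝ (Euc d)) := Submodule.mem_map.mpr ⟨y, hymem, rfl⟩
  have hdist : Metric.infDist w0
      (((stdSpanLT d r).map (k.toLinearEquiv : Euc d →ₗ[ℝ] Euc d) : Submodule ℝ (Euc d)) :
        Set (Euc d)) ≤ σ ⟨r, hrd⟩ * ‖u‖ := by
    have h1 : Metric.infDist w0 _ ≤ dist w0 (k y) := Metric.infDist_le_dist_of_mem hky
    have hw0x : w0 = k x := by rw [hxdef, k.apply_symm_apply]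
    have h2 : dist w0 (k y) = ‖x - y‖ := by
      rw [dist_eq_norm, hw0x, ← map_sub, k.norm_map]
    have h3 : ‖x - y‖ ≤ σ ⟨r, hrd⟩ * ‖u‖ := by
      have hsq : ‖x - y‖ ^ 2 ≤ (σ ⟨r, hrd⟩ * ‖u‖) ^ 2 := by
        rw [hnormsq]
        have hterm : ∀ i, ((x - y) i) ^ 2 ≤ σ ⟨r, hrd⟩ ^ 2 * (l u i) ^ 2 := by
          intro i
          have hxy : (x - y) i = if (i:ℕ) < r then 0 else x i := by
            have : y i = if (i:ℕ) < r then x i else 0 := rfl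
            rw [PiLp.sub_apply, this]
            split_ifs <;> ring
          rw [hxy]
          split_ifs with h
          · simpa using mul_nonneg (sq_nonneg (σ ⟨r, hrd⟩)) (sq_nonneg (l u i))
          · have hxi : x i = σ i * l u i := by
              rw [hxdef, ← hgu, hcartan u i]
            rw [hxi, mul_pow]
            have hle' : σ i ≤ σ ⟨r, hrd⟩ := hσmono (by simp [Fin.le_def, Nat.le_of_not_lt h])
            exact mul_le_mul_of_nonneg_right (by nlinarith [hσpos i]) (sq_nonneg (l u i))
        calc ∑ i, ((x - y) i) ^ 2 ≤ ∑ i, σ ⟨r, hrd⟩ ^ 2 * (l u i) ^ 2 :=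
              Finset.sum_le_sum fun i _ => hterm i
          _ = σ ⟨r, hrd⟩ ^ 2 * ∑ i, (l u i) ^ 2 := by rw [Finset.mul_sum]
          _ = σ ⟨r, hrd⟩ ^ 2 * ‖l u‖ ^ 2 := by rw [hnormsq]
          _ = (σ ⟨r, hrd⟩ * ‖u‖) ^ 2 := by rw [l.norm_map]; ring
      have hge : (0:ℝ) ≤ σ ⟨r, hrd⟩ * ‖u‖ := mul_nonneg (hσpos _).le (norm_nonneg u)
      nlinarith [norm_nonneg (x - y)]
    rw [h2] at h1
    exact h1.trans h3
  -- conclude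
  rw [le_div_iff₀ hWnpos]
  have hr1 : (1:ℝ) ≤ r := by exact_mod_cast hr
  have hσr := hσpos (⟨r, hrd⟩ : Fin d)
  have hpw : (0:ℝ) < σ ⟨0, h0d⟩ ^ (r - 1) := pow_pos (hσpos _) _
  have e0 := mul_le_mul_of_nonneg_right hdist hWn0
  refine e0.trans ?_
  have e1 : σ ⟨r, hrd⟩ * (wnorm (fun i => g (v i)) * ‖u‖) ≤ σ ⟨r, hrd⟩ * σ ⟨0, h0d⟩ ^ (r - 1) :=
    mul_le_mul_of_nonneg_left hkey hσr.le
  have e2 : σ ⟨r, hrd⟩ * σ ⟨0, h0d⟩ ^ (r - 1) ≤ r * σ ⟨0, h0d⟩ ^ (r - 1) * σ ⟨r, hrd⟩ := by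
    nlinarith [mul_nonneg (mul_nonneg (sub_nonneg.mpr hr1) hpw.le) hσr.le]
  nlinarith [e1, e2]
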